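/- Fix k ≥ 1 and score functions σ_1,…,σ_k as in the context. If S and S' are both equilibrium states with the same total fill ∑_{i=1}^k S(i) = ∑_{i=1}^k S'(i), then S = S'. -/
import Mathlib


/-- `x` is a nonnegative integer multiple of `1/2`. -/
def Half (x : ℝ) : Prop := ∃ k : ℕ, x = (k : ℝ) / 2

lemma Half.add_half {x : ℝ} (h : Half x) : Half (x + 1 / 2) := by
  obtain ⟨n, rfl⟩ := h
  exact ⟨n + 1, by push_cast; ring⟩

lemma Half.step {x y : ℝ} (hx : Half x) (hy : Half y) (h : x < y) :
    x + 1 / 2 ≤ y := by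
  obtain ⟨m, rfl⟩ := hx
  obtain ⟨n, rfl⟩ := hy
  have hmn : m < n := by
    have := (div_lt_div_iff_of_pos_right (c := (2:ℝ)) (by norm_num)).mp h
    exact_mod_cast this
  have : (m : ℝ) + 1 ≤ n := by exact_mod_cast hmn
  linarith

/-- Uniqueness of equilibrium states: two equilibrium states for the same score functions
with the same total fill are equal. -/
theorem stmt_8 (k : ℕ) (hk : 1 ≤ k) (σ : Fin k → ℝ → ℕ)
    (hmono : ∀ i, StrictMonoOn (σ i) {x : ℝ | Half x})
    (hinj : ∀ i v i' v', Half v → Half v' → σ i v = σ i' v' → i = i' ∧ v = v')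
    (S S' : Fin k → ℝ) (hS : ∀ i, Half (S i)) (hS' : ∀ i, Half (S' i))
    (hsum : ∑ i, S i = ∑ i, S' i)
    (heq : ∀ i j : Fin k, i ≠ j → σ j (S j) < σ i (S i + 1 / 2))
    (heq' : ∀ i j : Fin k, i ≠ j → σ j (S' j) < σ i (S' i + 1 / 2)) :
    S = S' := by
  by_contra hne
  obtain ⟨i, hi⟩ := Function.ne_iff.mp hne
  -- there is some index where S > S'
  have hex : ∃ i, S' i < S i := by
    by_contra h
    push_neg at h
    have : ∀ j ∈ Finset.univ, S j = S' j := by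
      intro j _
      by_contra hj
      have hlt : S j < S' j := lt_of_le_of_ne (h j) hj
      have : ∑ x, S x < ∑ x, S' x :=
        Finset.sum_lt_sum (fun x _ => h x) ⟨j, Finset.mem_univ j, hlt⟩
      linarith [hsum]
    exact hi (this i (Finset.mem_univ i))
  obtain ⟨a, ha⟩ := hex
  have hex' : ∃ j, S j < S' j := by
    by_contra h
    push_neg at h
    have : ∑ x, S' x < ∑ x, S x :=
      Finset.sum_lt_sum (fun x _ => h x) ⟨a, Finset.mem_univ a, ha⟩
    linarith [hsum]
  obtain ⟨b, hb⟩ := hex'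
  have hab : a ≠ b := by
    intro h; rw [h] at ha; linarith
  -- S a ≥ S' a + 1/2, S' b ≥ S b + 1/2
  have h1 : S' a + 1 / 2 ≤ S a := Half.step (hS' a) (hS a) ha
  have h2 : S b + 1 / 2 ≤ S' b := Half.step (hS b) (hS' b) hb
  -- σ a (S a) < σ b (S b + 1/2) ≤ σ b (S' b) < σ a (S' a + 1/2) ≤ σ a (S a)
  have m1 : σ b (S b + 1 / 2) ≤ σ b (S' b) :=
    ((hmono b).le_iff_le (Half.add_half (hS b)) (hS' b)).mpr h2
  have m2 : σ a (S' a + 1 / 2) ≤ σ a (S a) :=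
    ((hmono a).le_iff_le (Half.add_half (hS' a)) (hS a)).mpr h1
  have c1 : σ a (S a) < σ b (S b + 1 / 2) := heq b a hab.symm
  have c2 : σ b (S' b) < σ a (S' a + 1 / 2) := heq' a b hab
  omega
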